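/- arXiv:1605.04760 — 2 statements merged into one kernel-verified Lean document; each statement's English description precedes it below -/
import Mathlib

section
/- Let H(1,2;2,n−5) for n ≥ 6 be the bipartite graph with U1 = {u1}, U2 = {u2, u3}, |V1| = 2, |V2| = n−5, where u1 is adjacent to all of V1 ∪ V2 and u2, u3 are each adjacent exactly to V1. Then the number of spanning trees of H(1,2;2,n−5) equals 12. -/
noncomputable def spanningTreeCount {V : Type*} (G : SimpleGraph V) : ℕ :=
  {H : G.Subgraph | H.IsSpanning ∧ H.coe.IsTree}.ncard

/-- The double nested graph `H(1,m₂; a, b)`: `u₁ = Sum.inl 0` is adjacent to all of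
`V₁ ∪ V₂`, and the `m₂` vertices `Sum.inl i`, `i ≠ 0`, are adjacent exactly to `V₁`. -/
def DNH (m2 a b : ℕ) : SimpleGraph (Fin (1 + m2) ⊕ (Fin a ⊕ Fin b)) :=
  SimpleGraph.fromRel (fun x y =>
    (∃ v : Fin a ⊕ Fin b, x = Sum.inl ⟨0, Nat.succ_le_of_lt (Nat.lt_of_lt_of_le Nat.zero_lt_one (Nat.le_add_right 1 m2))⟩ ∧ y = Sum.inr v) ∨
    (∃ (u : Fin (1 + m2)) (v : Fin a), (u : ℕ) ≠ 0 ∧ x = Sum.inl u ∧ y = Sum.inr (Sum.inl v)))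

open SimpleGraph


namespace STC

lemma reach_invar {V : Type*} {H : SimpleGraph V} (P : V → Prop)
    (hP : ∀ a b, H.Adj a b → (P a ↔ P b)) {a b : V} (hr : H.Reachable a b) : P a ↔ P b := by
  obtain ⟨w⟩ := hr
  induction w with
  | nil => rfl
  | cons h _ ih => exact (hP _ _ h).trans ih

lemma cycle_snd_ne {V : Type*} {H : SimpleGraph V} {u : V} {c : H.Walk u u}
    (hc : c.IsCycle) : c.getVert 1 ≠ c.getVert (c.length - 1) := by
  have hL : 3 ≤ c.length := hc.three_le_length
  have hnil : ¬ c.Nil := by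
    rw [SimpleGraph.Walk.nil_iff_length_eq]; omega
  have hc' := hc
  rw [← SimpleGraph.Walk.cons_tail_eq c hnil, SimpleGraph.Walk.cons_isCycle_iff] at hc'
  have ht : c.tail.IsPath := hc'.1
  set t := c.tail with htdef
  have htlen : t.length + 1 = c.length := SimpleGraph.Walk.length_tail_add_one hnil
  have htnil : ¬ t.Nil := by rw [SimpleGraph.Walk.nil_iff_length_eq]; omega
  have h1 : c.getVert (c.length - 1) = t.getVert (c.length - 2) := by
    have := SimpleGraph.Walk.getVert_tail (n := c.length - 2) c
    rw [← htdef] at this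
    rw [this]; congr 1; omega
  have h2 : t.getVert (c.length - 2) ∈ t.support.tail := by
    rw [← SimpleGraph.Walk.support_tail_of_not_nil t htnil]
    rw [SimpleGraph.Walk.mem_support_iff_exists_getVert]
    refine ⟨c.length - 3, ?_, ?_⟩
    · rw [SimpleGraph.Walk.getVert_tail t]; congr 1; omega
    · have : t.tail.length + 1 = t.length := SimpleGraph.Walk.length_tail_add_one htnil
      omega
  intro heq
  rw [h1] at heq
  have hnodup := ht.support_nodup
  rw [SimpleGraph.Walk.support_eq_cons] at hnodup
  rw [List.nodup_cons] at hnodup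
  obtain ⟨hn1, -⟩ := hnodup
  revert h2 hn1
  generalize t.support.tail = l
  intro h2 hn1
  exact hn1 (by show c.getVert 1 ∈ l; rw [heq]; exact h2)

lemma acyclic_of_height {V : Type*} [DecidableEq V] {H : SimpleGraph V} (f : V → ℕ)
    (h1 : ∀ a b, H.Adj a b → f a ≠ f b)
    (h2 : ∀ a b c, H.Adj a b → H.Adj a c → f b < f a → f c < f a → b = c) :
    H.IsAcyclic := by
  intro v c hc
  have hsupne : c.support.toFinset.Nonempty := by
    simp [List.toFinset_nonempty_iff]
  obtain ⟨u, hu, hmax⟩ := c.support.toFinset.exists_max_image f hsupne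
  rw [List.mem_toFinset] at hu
  set c' := c.rotate u hu with hc'def
  have hcyc : c'.IsCycle := hc.rotate hu
  have hmem : ∀ z ∈ c'.support, f z ≤ f u := by
    intro z hz
    rcases List.eq_or_mem_of_mem_cons (SimpleGraph.Walk.support_eq_cons c' ▸ hz) with h | h
    · exact h ▸ le_refl _
    · apply hmax
      rw [List.mem_toFinset]
      have : z ∈ c.support.tail := (SimpleGraph.Walk.support_rotate c u hu).mem_iff.mp h
      exact List.mem_of_mem_tail this
  have hL : 3 ≤ c'.length := hcyc.three_le_length
  have hnil : ¬ c'.Nil := by rw [SimpleGraph.Walk.nil_iff_length_eq]; omega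
  set x := c'.getVert 1 with hx
  set y := c'.getVert (c'.length - 1) with hy
  have hux : H.Adj u x := c'.adj_snd hnil
  have huy : H.Adj y u := by
    have := c'.adj_getVert_succ (i := c'.length - 1) (by omega)
    have he : c'.length - 1 + 1 = c'.length := by omega
    rw [he, SimpleGraph.Walk.getVert_length] at this
    exact this
  have hxs : x ∈ c'.support := by
    rw [SimpleGraph.Walk.mem_support_iff_exists_getVert]; exact ⟨1, rfl, by omega⟩
  have hys : y ∈ c'.support := by
    rw [SimpleGraph.Walk.mem_support_iff_exists_getVert]; exact ⟨c'.length - 1, rfl, by omega⟩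
  have hfx : f x < f u := lt_of_le_of_ne (hmem x hxs) (fun h => h1 u x hux h.symm)
  have hfy : f y < f u := lt_of_le_of_ne (hmem y hys) (fun h => h1 u y huy.symm h.symm)
  exact cycle_snd_ne hcyc (h2 u x y hux huy.symm hfx hfy)

end STC

namespace STC

variable {b : ℕ}

abbrev VV (b : ℕ) := Fin (1 + 2) ⊕ (Fin 2 ⊕ Fin b)

def uu (i : Fin (1+2)) : VV b := Sum.inl i
def ww (j : Fin 2) : VV b := Sum.inr (Sum.inl j)
def pp (v : Fin b) : VV b := Sum.inr (Sum.inr v)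

@[simp] lemma uu_inj {i i' : Fin (1+2)} : (uu i : VV b) = uu i' ↔ i = i' := by
  simp [uu]
@[simp] lemma ww_inj {j j' : Fin 2} : (ww j : VV b) = ww j' ↔ j = j' := by
  simp [ww]
@[simp] lemma pp_inj {v v' : Fin b} : (pp v : VV b) = pp v' ↔ v = v' := by
  simp [pp]
@[simp] lemma uu_ne_ww {i j} : (uu i : VV b) ≠ ww j := by simp [uu, ww]
@[simp] lemma uu_ne_pp {i v} : (uu i : VV b) ≠ pp v := by simp [uu, pp]
@[simp] lemma ww_ne_uu {i j} : (ww j : VV b) ≠ uu i := by simp [uu, ww]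
@[simp] lemma ww_ne_pp {j v} : (ww j : VV b) ≠ pp v := by simp [ww, pp]
@[simp] lemma pp_ne_uu {i v} : (pp v : VV b) ≠ uu i := by simp [uu, pp]
@[simp] lemma pp_ne_ww {j v} : (pp v : VV b) ≠ ww j := by simp [ww, pp]

/-- Adjacency characterization of `DNH 2 2 b`. -/
lemma dnh_adj (x y : VV b) :
    (DNH 2 2 b).Adj x y ↔
      (∃ i j, (x = uu i ∧ y = ww j) ∨ (x = ww j ∧ y = uu i)) ∨
      (∃ v, (x = uu 0 ∧ y = pp v) ∨ (x = pp v ∧ y = uu 0)) := by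
  constructor
  · rw [DNH, fromRel_adj]
    rintro ⟨hne, h | h⟩
    · rcases h with ⟨v, rfl, rfl⟩ | ⟨u, v, hu, rfl, rfl⟩
      · rcases v with j | v
        · exact Or.inl ⟨0, j, Or.inl ⟨rfl, rfl⟩⟩
        · exact Or.inr ⟨v, Or.inl ⟨rfl, rfl⟩⟩
      · exact Or.inl ⟨u, v, Or.inl ⟨rfl, rfl⟩⟩
    · rcases h with ⟨v, rfl, rfl⟩ | ⟨u, v, hu, rfl, rfl⟩
      · rcases v with j | v
        · exact Or.inl ⟨0, j, Or.inr ⟨rfl, rfl⟩⟩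
        · exact Or.inr ⟨v, Or.inr ⟨rfl, rfl⟩⟩
      · exact Or.inl ⟨u, v, Or.inr ⟨rfl, rfl⟩⟩
  · rw [DNH, fromRel_adj]
    rintro (⟨i, j, ⟨rfl, rfl⟩ | ⟨rfl, rfl⟩⟩ | ⟨v, ⟨rfl, rfl⟩ | ⟨rfl, rfl⟩⟩)
    · refine ⟨by simp [uu, ww], ?_⟩
      by_cases hi : i = 0
      · subst hi; exact Or.inl (Or.inl ⟨Sum.inl j, rfl, rfl⟩)
      · exact Or.inl (Or.inr ⟨i, j, fun h => hi (Fin.ext h), rfl, rfl⟩)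
    · refine ⟨by simp [uu, ww], ?_⟩
      by_cases hi : i = 0
      · subst hi; exact Or.inr (Or.inl ⟨Sum.inl j, rfl, rfl⟩)
      · exact Or.inr (Or.inr ⟨i, j, fun h => hi (Fin.ext h), rfl, rfl⟩)
    · exact ⟨by simp [uu, pp], Or.inl (Or.inl ⟨Sum.inr v, rfl, rfl⟩)⟩
    · exact ⟨by simp [uu, pp], Or.inr (Or.inl ⟨Sum.inr v, rfl, rfl⟩)⟩

@[simp] lemma dnh_adj_uw (i : Fin (1+2)) (j : Fin 2) : (DNH 2 2 b).Adj (uu i) (ww j) := by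
  rw [dnh_adj]; exact Or.inl ⟨i, j, Or.inl ⟨rfl, rfl⟩⟩

@[simp] lemma dnh_adj_up (v : Fin b) : (DNH 2 2 b).Adj (uu 0) (pp v) := by
  rw [dnh_adj]; exact Or.inr ⟨v, Or.inl ⟨rfl, rfl⟩⟩

/-- which core edges are kept -/
def keep (q : Fin (1+2) × Fin 2 × Fin 2) (k : Fin (1+2)) (j : Fin 2) : Prop :=
  k = q.1 ∨ (k = q.1 + 1 ∧ j = q.2.1) ∨ (k = q.1 + 2 ∧ j = q.2.2)

instance (q k j) : Decidable (keep q k j) := by unfold keep; infer_instance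

/-- the 12 candidate spanning trees -/
def psi (q : Fin (1+2) × Fin 2 × Fin 2) : SimpleGraph (VV b) :=
  SimpleGraph.fromRel (fun x y =>
    (∃ v : Fin b, x = uu 0 ∧ y = pp v) ∨ (∃ k j, x = uu k ∧ y = ww j ∧ keep q k j))

@[simp] lemma psi_adj_uw {q} (k : Fin (1+2)) (j : Fin 2) :
    (psi q : SimpleGraph (VV b)).Adj (uu k) (ww j) ↔ keep q k j := by
  rw [psi, fromRel_adj]
  constructor
  · rintro ⟨-, h | h⟩
    · rcases h with ⟨v, -, h⟩ | ⟨k', j', h1, h2, hk⟩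
      · simp [ww, pp] at h
      · rw [uu_inj] at h1; rw [ww_inj] at h2; subst h1; subst h2; exact hk
    · rcases h with ⟨v, -, h⟩ | ⟨k', j', h1, -⟩
      · simp [uu, pp] at h
      · simp [uu, ww] at h1
  · intro hk
    exact ⟨by simp, Or.inl (Or.inr ⟨k, j, rfl, rfl, hk⟩)⟩

@[simp] lemma psi_adj_up {q} (k : Fin (1+2)) (v : Fin b) :
    (psi q : SimpleGraph (VV b)).Adj (uu k) (pp v) ↔ k = 0 := by
  rw [psi, fromRel_adj]
  constructor
  · rintro ⟨-, h | h⟩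
    · rcases h with ⟨v', h1, -⟩ | ⟨k', j', -, h2, -⟩
      · rw [uu_inj] at h1; exact h1
      · simp [pp, ww] at h2
    · rcases h with ⟨v', h1, -⟩ | ⟨k', j', h1, -⟩
      · simp [uu, pp] at h1
      · simp [uu, pp] at h1
  · rintro rfl
    exact ⟨by simp, Or.inl (Or.inl ⟨v, rfl, rfl⟩)⟩

@[simp] lemma psi_not_adj_uu {q} (k k' : Fin (1+2)) :
    ¬ (psi q : SimpleGraph (VV b)).Adj (uu k) (uu k') := by
  rw [psi, fromRel_adj]
  rintro ⟨-, h | h⟩ <;>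
    rcases h with ⟨v, -, h⟩ | ⟨k1, j1, -, h, -⟩ <;> simp [uu, ww, pp] at h

@[simp] lemma psi_not_adj_ww {q} (j j' : Fin 2) :
    ¬ (psi q : SimpleGraph (VV b)).Adj (ww j) (ww j') := by
  rw [psi, fromRel_adj]
  rintro ⟨-, h | h⟩ <;>
    rcases h with ⟨v, h, -⟩ | ⟨k1, j1, h, -⟩ <;> simp [uu, ww, pp] at h

@[simp] lemma psi_not_adj_wp {q} (j : Fin 2) (v : Fin b) :
    ¬ (psi q : SimpleGraph (VV b)).Adj (ww j) (pp v) := by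
  rw [psi, fromRel_adj]
  rintro ⟨-, h | h⟩
  · rcases h with ⟨v', h, -⟩ | ⟨k1, j1, h, -⟩ <;> simp [uu, ww, pp] at h
  · rcases h with ⟨v', -, h⟩ | ⟨k1, j1, h, -⟩ <;> simp [uu, ww, pp] at h

@[simp] lemma psi_not_adj_pp {q} (v v' : Fin b) :
    ¬ (psi q : SimpleGraph (VV b)).Adj (pp v) (pp v') := by
  rw [psi, fromRel_adj]
  rintro ⟨-, h | h⟩ <;>
    rcases h with ⟨v1, h, -⟩ | ⟨k1, j1, h, -⟩ <;> simp [uu, ww, pp] at h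

lemma psi_le : (psi q : SimpleGraph (VV b)) ≤ DNH 2 2 b := by
  intro x y h
  rw [psi, fromRel_adj] at h
  obtain ⟨hne, h | h⟩ := h <;>
  · rcases h with ⟨v, rfl, rfl⟩ | ⟨k, j, rfl, rfl, -⟩
    · first
      | exact dnh_adj_up v
      | exact (dnh_adj_up v).symm
    · first
      | exact dnh_adj_uw k j
      | exact (dnh_adj_uw k j).symm

end STC

namespace STC
variable {b : ℕ}

lemma fin3_cases : ∀ (k i : Fin (1+2)), k = i ∨ k = i + 1 ∨ k = i + 2 := by decide

def wlv (q : Fin (1+2) × Fin 2 × Fin 2) (j : Fin 2) : ℕ := if keep q 0 j then 1 else 3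
def choice (q : Fin (1+2) × Fin 2 × Fin 2) (k : Fin (1+2)) : Fin 2 :=
  if k = q.1 + 1 then q.2.1 else q.2.2
def ulv (q : Fin (1+2) × Fin 2 × Fin 2) (k : Fin (1+2)) : ℕ :=
  if k = 0 then 0 else if k = q.1 then 2 else wlv q (choice q k) + 1

def hgt (q : Fin (1+2) × Fin 2 × Fin 2) : VV b → ℕ
  | Sum.inr (Sum.inr _) => 1
  | Sum.inr (Sum.inl j) => wlv q j
  | Sum.inl k => ulv q k

@[simp] lemma hgt_inl {q} (k : Fin (1+2)) : (hgt q (Sum.inl k : VV b)) = ulv q k := rfl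
@[simp] lemma hgt_inrl {q} (j : Fin 2) : (hgt q (Sum.inr (Sum.inl j) : VV b)) = wlv q j := rfl
@[simp] lemma hgt_uu {q} (k : Fin (1+2)) : (hgt q (uu k : VV b)) = ulv q k := rfl
@[simp] lemma hgt_ww {q} (j : Fin 2) : (hgt q (ww j : VV b)) = wlv q j := rfl
@[simp] lemma hgt_pp {q} (v : Fin b) : (hgt q (pp v : VV b)) = 1 := rfl
@[simp] lemma hgt_inrr {q} (v : Fin b) : (hgt q (Sum.inr (Sum.inr v) : VV b)) = 1 := rfl

lemma psi_adj_pp_right {q} {v : Fin b} {t : VV b} (h : (psi q).Adj (pp v) t) : t = uu 0 := by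
  rcases t with k | (j | v')
  · have : k = 0 := (psi_adj_up (q := q) k v).mp h.symm
    rw [show (Sum.inl k : VV b) = uu k from rfl, this]
  · exact absurd h.symm (psi_not_adj_wp j v)
  · exact absurd h (psi_not_adj_pp v v')

lemma keep_self (q : Fin (1+2) × Fin 2 × Fin 2) (j : Fin 2) : keep q q.1 j := Or.inl rfl

lemma psi_connected (q) : (psi q : SimpleGraph (VV b)).Connected := by
  have hw : ∀ j : Fin 2, (psi q).Reachable (ww j : VV b) (uu q.1) :=
    fun j => (((psi_adj_uw q.1 j).mpr (keep_self q j)).symm).reachable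
  have hu : ∀ k : Fin (1+2), (psi q).Reachable (uu k : VV b) (uu q.1) := by
    intro k
    rcases fin3_cases k q.1 with rfl | hk | hk
    · exact Reachable.refl _
    · exact (((psi_adj_uw k q.2.1).mpr (Or.inr (Or.inl ⟨hk, rfl⟩))).reachable).trans (hw _)
    · exact (((psi_adj_uw k q.2.2).mpr (Or.inr (Or.inr ⟨hk, rfl⟩))).reachable).trans (hw _)
  have hub : ∀ x : VV b, (psi q).Reachable x (uu q.1) := by
    intro x
    rcases x with k | (j | v)
    · exact hu k
    · exact hw j
    · exact ((((psi_adj_up 0 v).mpr rfl).symm).reachable).trans (hu 0)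
  have : Nonempty (VV b) := ⟨uu 0⟩
  exact ⟨fun x y => (hub x).trans (hub y).symm⟩

lemma psi_acyclic (q) : (psi q : SimpleGraph (VV b)).IsAcyclic := by
  apply acyclic_of_height (hgt q)
  · rintro (k | (j | v)) (k' | (j' | v')) h
    · exact absurd h (psi_not_adj_uu k k')
    · have hk := (psi_adj_uw (q := q) k j').mp h
      simp only [hgt_inl, hgt_inrl]
      clear h
      revert hk; revert q k j'; decide
    · have hk : k = 0 := (psi_adj_up (q := q) k v').mp h
      subst hk
      simp [ulv]
    · have hk := (psi_adj_uw (q := q) k' j).mp h.symm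
      simp only [hgt_inl, hgt_inrl]
      clear h
      revert hk; revert q k' j; decide
    · exact absurd h (psi_not_adj_ww j j')
    · exact absurd h (psi_not_adj_wp j v')
    · have hk : k' = 0 := (psi_adj_up (q := q) k' v).mp h.symm
      subst hk
      simp [ulv]
    · exact absurd h.symm (psi_not_adj_wp j' v)
    · exact absurd h (psi_not_adj_pp v v')
  · rintro (k | (j | v)) y z hy hz hylt hzlt
    · -- x = uu k
      rcases y with k' | (j' | v')
      · exact absurd hy (psi_not_adj_uu k k')
      · rcases z with k'' | (j'' | v'')
        · exact absurd hz (psi_not_adj_uu k k'')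
        · have h1 := (psi_adj_uw (q := q) k j').mp hy
          have h2 := (psi_adj_uw (q := q) k j'').mp hz
          simp only [hgt_inl, hgt_inrl] at hylt hzlt
          have : j' = j'' := by clear hy hz; revert h1 h2 hylt hzlt; revert q k j' j''; decide
          rw [this]
        · have hk : k = 0 := (psi_adj_up (q := q) k v'').mp hz
          subst hk
          simp [ulv] at hzlt
      · have hk : k = 0 := (psi_adj_up (q := q) k v').mp hy
        subst hk
        simp [ulv] at hylt
    · -- x = ww j
      have hy' : ∃ k, y = (uu k : VV b) := by
        rcases y with k | (j' | v')
        · exact ⟨k, rfl⟩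
        · exact absurd hy (psi_not_adj_ww j j')
        · exact absurd hy (psi_not_adj_wp j v')
      have hz' : ∃ k, z = (uu k : VV b) := by
        rcases z with k | (j' | v')
        · exact ⟨k, rfl⟩
        · exact absurd hz (psi_not_adj_ww j j')
        · exact absurd hz (psi_not_adj_wp j v')
      obtain ⟨k, rfl⟩ := hy'
      obtain ⟨k', rfl⟩ := hz'
      have h1 := (psi_adj_uw (q := q) k j).mp hy.symm
      have h2 := (psi_adj_uw (q := q) k' j).mp hz.symm
      simp only [hgt_inl, hgt_inrl, hgt_uu, hgt_ww] at hylt hzlt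
      have : k = k' := by clear hy hz; revert h1 h2 hylt hzlt; revert q j k k'; decide
      rw [this]
    · rw [psi_adj_pp_right hy, psi_adj_pp_right hz]

lemma psi_isTree (q) : (psi q : SimpleGraph (VV b)).IsTree :=
  ⟨psi_connected q, psi_acyclic q⟩

end STC

namespace STC
variable {b : ℕ}

lemma fin3_succ_ne : ∀ k : Fin (1+2), k + 1 ≠ k := by decide
lemma fin3_succ2_ne : ∀ k : Fin (1+2), k + 2 ≠ k := by decide
lemma fin2_cases : ∀ j : Fin 2, j = 0 ∨ j = 1 := by decide
lemma fin2_other : ∀ j j' i : Fin 2, j ≠ j' → i = j ∨ i = j' := by decide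

section complete
variable {G' : SimpleGraph (VV b)} (hle : G' ≤ DNH 2 2 b)

include hle

lemma pp_nbr' {v : Fin b} {t : VV b} (h : G'.Adj (pp v) t) : t = uu 0 := by
  have := hle h
  rw [dnh_adj] at this
  rcases this with ⟨i, j, ⟨h1, -⟩ | ⟨h1, -⟩⟩ | ⟨v', ⟨h1, -⟩ | ⟨-, h2⟩⟩
  · exact absurd h1 (pp_ne_uu)
  · exact absurd h1 (pp_ne_ww)
  · exact absurd h1 (pp_ne_uu)
  · exact h2

lemma ww_nbr' {j : Fin 2} {t : VV b} (h : G'.Adj (ww j) t) : ∃ i, t = uu i := by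
  have := hle h
  rw [dnh_adj] at this
  rcases this with ⟨i, j', ⟨h1, -⟩ | ⟨-, h2⟩⟩ | ⟨v', ⟨h1, -⟩ | ⟨h1, -⟩⟩
  · exact absurd h1 (ww_ne_uu)
  · exact ⟨i, h2⟩
  · exact absurd h1 (ww_ne_uu)
  · exact absurd h1 (ww_ne_pp)

lemma uu_nbr' {k : Fin (1+2)} {t : VV b} (h : G'.Adj (uu k) t) :
    (∃ j, t = ww j) ∨ (k = 0 ∧ ∃ v, t = pp v) := by
  have := hle h
  rw [dnh_adj] at this
  rcases this with ⟨i, j', ⟨-, h2⟩ | ⟨h1, -⟩⟩ | ⟨v', ⟨h1, h2⟩ | ⟨h1, -⟩⟩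
  · exact Or.inl ⟨j', h2⟩
  · exact absurd h1 (uu_ne_ww)
  · exact Or.inr ⟨by rwa [uu_inj] at h1, v', h2⟩
  · exact absurd h1 (uu_ne_pp)

variable (ht : G'.IsTree)
include ht

lemma tree_pend (v : Fin b) : G'.Adj (uu 0) (pp v) := by
  obtain ⟨p⟩ := ht.isConnected.preconnected (pp v : VV b) (uu 0)
  have hnil : ¬ p.Nil := by
    intro hn
    have := hn.eq
    simp [uu, pp] at this
  have h1 : G'.Adj (pp v) (p.getVert 1) := p.adj_snd hnil
  have := pp_nbr' hle h1
  rw [this] at h1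
  exact h1.symm

lemma tree_some (k : Fin (1+2)) : ∃ j, G'.Adj (uu k) (ww j) := by
  by_contra hnone
  push_neg at hnone
  set P : VV b → Prop := fun x => x = uu k ∨ (k = 0 ∧ ∃ v, x = pp v) with hP
  have step : ∀ a c, G'.Adj a c → P a → P c := by
    intro a c hac hPa
    rcases hPa with rfl | ⟨rfl, v, rfl⟩
    · rcases uu_nbr' hle hac with ⟨j, rfl⟩ | ⟨rfl, v, rfl⟩
      · exact absurd hac (hnone j)
      · exact Or.inr ⟨rfl, v, rfl⟩
    · rw [pp_nbr' hle hac]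
      exact Or.inl rfl
  have hiff : ∀ a c, G'.Adj a c → (P a ↔ P c) :=
    fun a c h => ⟨step a c h, step c a h.symm⟩
  have hreach := ht.isConnected.preconnected (uu k : VV b) (ww 0)
  have := (reach_invar P hiff hreach).mp (Or.inl rfl)
  rcases this with h | ⟨-, v, h⟩
  · exact ww_ne_uu h
  · exact ww_ne_pp h

lemma tree_both_unique {k k' : Fin (1+2)}
    (h1 : G'.Adj (uu k) (ww 0)) (h2 : G'.Adj (uu k) (ww 1))
    (h1' : G'.Adj (uu k') (ww 0)) (h2' : G'.Adj (uu k') (ww 1)) : k = k' := by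
  by_contra hkk
  set c : G'.Walk (uu k : VV b) (uu k) :=
    Walk.cons h1 (Walk.cons h1'.symm (Walk.cons h2' (Walk.cons h2.symm Walk.nil))) with hc
  have hcyc : c.IsCycle := by
    rw [Walk.isCycle_def]
    refine ⟨⟨?_⟩, by simp [hc], ?_⟩
    · simp only [hc, Walk.edges_cons, Walk.edges_nil, List.nodup_cons, List.mem_cons,
        List.mem_singleton, List.not_mem_nil, or_false, not_or, List.nodup_nil, and_true]
      refine ⟨⟨?_, ?_, ?_⟩, ⟨?_, ?_⟩, ?_⟩ <;>
        simp [Sym2.eq_iff, uu, ww, hkk, Ne.symm hkk, Fin.ext_iff]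
    · simp only [hc, Walk.support_cons, Walk.support_nil, List.tail_cons, List.nodup_cons,
        List.mem_cons, List.not_mem_nil, or_false, not_or, List.nodup_nil, and_true,
        List.mem_singleton]
      refine ⟨⟨?_, ?_, ?_⟩, ⟨?_, ?_⟩, ?_⟩ <;>
        simp [uu, ww, hkk, Ne.symm hkk, Fin.ext_iff]
  exact ht.IsAcyclic c hcyc

lemma tree_exists_both : ∃ k, G'.Adj (uu k) (ww 0) ∧ G'.Adj (uu k) (ww 1) := by
  by_contra hnb
  push_neg at hnb
  choose g hg using tree_some hle ht
  have hgu : ∀ k j, G'.Adj (uu k) (ww j) → j = g k := by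
    intro k j hadj
    by_contra hne
    have h0 : (0 : Fin 2) = j ∨ (0 : Fin 2) = g k := fin2_other j (g k) 0 hne
    have h1 : (1 : Fin 2) = j ∨ (1 : Fin 2) = g k := fin2_other j (g k) 1 hne
    have hb0 : G'.Adj (uu k) (ww 0) := by rcases h0 with h | h <;> rw [h] <;> [exact hadj; exact hg k]
    have hb1 : G'.Adj (uu k) (ww 1) := by rcases h1 with h | h <;> rw [h] <;> [exact hadj; exact hg k]
    exact hnb k hb0 hb1
  set P : VV b → Prop := fun x =>
    match x with
    | Sum.inl k => g k = 0
    | Sum.inr (Sum.inl j) => j = 0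
    | Sum.inr (Sum.inr _) => g 0 = 0
    with hP
  have step : ∀ a c, G'.Adj a c → P a → P c := by
    intro a c hac hPa
    rcases a with k | (j | v)
    · have hPa' : g k = 0 := hPa
      rcases uu_nbr' hle hac with ⟨j, rfl⟩ | ⟨h0, v, rfl⟩
      · have hj := hgu k j hac
        show j = 0
        rw [hj]; exact hPa'
      · show g 0 = 0
        rw [← h0]; exact hPa'
    · have hPa' : j = 0 := hPa
      obtain ⟨i, rfl⟩ := ww_nbr' hle hac
      have hj := hgu i j hac.symm
      show g i = 0
      rw [← hj]; exact hPa'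
    · have hPa' : g 0 = 0 := hPa
      have h0 := pp_nbr' hle hac
      subst h0
      exact hPa'
  have hiff : ∀ a c, G'.Adj a c → (P a ↔ P c) :=
    fun a c h => ⟨step a c h, step c a h.symm⟩
  have hreach := ht.isConnected.preconnected (ww 0 : VV b) (ww 1)
  have hcon := (reach_invar P hiff hreach).mp (show (0 : Fin 2) = 0 from rfl)
  have hcon' : (1 : Fin 2) = 0 := hcon
  exact absurd hcon' (by decide)

lemma tree_eq_psi : ∃ q, G' = psi q := by
  obtain ⟨k0, hb0, hb1⟩ := tree_exists_both hle ht
  have hA : ∀ j, G'.Adj (uu k0) (ww j) := by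
    intro j
    rcases fin2_cases j with rfl | rfl
    · exact hb0
    · exact hb1
  obtain ⟨j1, hB⟩ := tree_some hle ht (k0 + 1)
  obtain ⟨j2, hC⟩ := tree_some hle ht (k0 + 2)
  have hk1 : k0 + 1 ≠ k0 := fin3_succ_ne k0
  have hk2 : k0 + 2 ≠ k0 := fin3_succ2_ne k0
  have hB' : ∀ j, G'.Adj (uu (k0+1)) (ww j) → j = j1 := by
    intro j hadj
    by_contra hne
    have h0 : (0 : Fin 2) = j ∨ (0 : Fin 2) = j1 := fin2_other j j1 0 hne
    have h1 : (1 : Fin 2) = j ∨ (1 : Fin 2) = j1 := fin2_other j j1 1 hne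
    have hbb0 : G'.Adj (uu (k0+1)) (ww 0) := by rcases h0 with h | h <;> rw [h] <;> [exact hadj; exact hB]
    have hbb1 : G'.Adj (uu (k0+1)) (ww 1) := by rcases h1 with h | h <;> rw [h] <;> [exact hadj; exact hB]
    exact hk1 (tree_both_unique hle ht hbb0 hbb1 hb0 hb1)
  have hC' : ∀ j, G'.Adj (uu (k0+2)) (ww j) → j = j2 := by
    intro j hadj
    by_contra hne
    have h0 : (0 : Fin 2) = j ∨ (0 : Fin 2) = j2 := fin2_other j j2 0 hne
    have h1 : (1 : Fin 2) = j ∨ (1 : Fin 2) = j2 := fin2_other j j2 1 hne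
    have hbb0 : G'.Adj (uu (k0+2)) (ww 0) := by rcases h0 with h | h <;> rw [h] <;> [exact hadj; exact hC]
    have hbb1 : G'.Adj (uu (k0+2)) (ww 1) := by rcases h1 with h | h <;> rw [h] <;> [exact hadj; exact hC]
    exact hk2 (tree_both_unique hle ht hbb0 hbb1 hb0 hb1)
  refine ⟨(k0, j1, j2), ?_⟩
  have huw : ∀ k j, G'.Adj (uu k) (ww j) ↔ keep (k0, j1, j2) k j := by
    intro k j
    constructor
    · intro hadj
      rcases fin3_cases k k0 with rfl | rfl | rfl
      · exact Or.inl rfl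
      · exact Or.inr (Or.inl ⟨rfl, hB' j hadj⟩)
      · exact Or.inr (Or.inr ⟨rfl, hC' j hadj⟩)
    · rintro (rfl | ⟨rfl, rfl⟩ | ⟨rfl, rfl⟩)
      · exact hA j
      · exact hB
      · exact hC
  have hup : ∀ k v, G'.Adj (uu k) (pp v) ↔ k = 0 := by
    intro k v
    constructor
    · intro hadj
      rcases uu_nbr' hle hadj with ⟨j, hj⟩ | ⟨h0, -⟩
      · exact absurd hj.symm (ww_ne_pp)
      · exact h0
    · rintro rfl
      exact tree_pend hle ht v
  ext x y
  rcases x with k | (j | v) <;> rcases y with k' | (j' | v')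
  · constructor
    · intro h
      rcases uu_nbr' hle h with ⟨j, hj⟩ | ⟨-, v, hj⟩
      · exact absurd hj (uu_ne_ww)
      · exact absurd hj (uu_ne_pp)
    · intro h
      exact absurd h (psi_not_adj_uu k k')
  · exact (huw k j').trans (psi_adj_uw k j').symm
  · exact (hup k v').trans (psi_adj_up k v').symm
  · constructor
    · intro h
      exact ((psi_adj_uw k' j).mpr ((huw k' j).mp h.symm)).symm
    · intro h
      exact ((huw k' j).mpr ((psi_adj_uw k' j).mp h.symm)).symm
  · constructor
    · intro h
      obtain ⟨i, hi⟩ := ww_nbr' hle h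
      exact absurd hi (ww_ne_uu)
    · intro h
      exact absurd h (psi_not_adj_ww j j')
  · constructor
    · intro h
      obtain ⟨i, hi⟩ := ww_nbr' hle h
      exact absurd hi (pp_ne_uu)
    · intro h
      exact absurd h (psi_not_adj_wp j v')
  · constructor
    · intro h
      have h0 : k' = 0 := uu_inj.mp (pp_nbr' hle h)
      subst h0
      exact ((psi_adj_up (q := (k0, j1, j2)) 0 v).mpr rfl).symm
    · intro h
      have hk : k' = 0 := (psi_adj_up k' v).mp h.symm
      subst hk
      exact (tree_pend hle ht v).symm
  · constructor
    · intro h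
      have := pp_nbr' hle h
      exact absurd this (ww_ne_uu)
    · intro h
      exact absurd h.symm (psi_not_adj_wp j' v)
  · constructor
    · intro h
      have := pp_nbr' hle h
      exact absurd this (pp_ne_uu)
    · intro h
      exact absurd h (psi_not_adj_pp v v')

end complete
end STC

namespace STC
variable {b : ℕ}

lemma psi_injective : Function.Injective (psi : Fin (1+2) × Fin 2 × Fin 2 → SimpleGraph (VV b)) := by
  intro q q' h
  have hk : ∀ k j, keep q k j ↔ keep q' k j := by
    intro k j
    constructor
    · intro hkeep
      exact (psi_adj_uw (b := b) k j).mp (h ▸ (psi_adj_uw (b := b) k j).mpr hkeep)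
    · intro hkeep
      exact (psi_adj_uw (b := b) k j).mp (h.symm ▸ (psi_adj_uw (b := b) k j).mpr hkeep)
  clear h
  revert hk
  revert q q'
  decide

lemma tree_set_eq :
    {G' : SimpleGraph (VV b) | G' ≤ DNH 2 2 b ∧ G'.IsTree} = Set.range psi := by
  ext G'
  constructor
  · rintro ⟨hle, ht⟩
    obtain ⟨q, hq⟩ := tree_eq_psi hle ht
    exact ⟨q, hq.symm⟩
  · rintro ⟨q, rfl⟩
    exact ⟨psi_le, psi_isTree q⟩

lemma isAcyclic_of_iso {V W : Type*} {A : SimpleGraph V} {B : SimpleGraph W}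
    (e : A ≃g B) (hB : B.IsAcyclic) : A.IsAcyclic := by
  intro v c hc
  exact hB (c.map e.toHom) (hc.map (f := e.toHom) (fun a b hab => e.toEquiv.injective hab))

lemma isTree_iff_of_iso {V W : Type*} {A : SimpleGraph V} {B : SimpleGraph W}
    (e : A ≃g B) : A.IsTree ↔ B.IsTree := by
  constructor
  · rintro ⟨hc, ha⟩
    exact ⟨(Iso.connected_iff e).mp hc, isAcyclic_of_iso e.symm ha⟩
  · rintro ⟨hc, ha⟩
    exact ⟨(Iso.connected_iff e).mpr hc, isAcyclic_of_iso e ha⟩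

lemma spanningTreeCount_eq (G : SimpleGraph (VV b)) :
    spanningTreeCount G = {G' : SimpleGraph (VV b) | G' ≤ G ∧ G'.IsTree}.ncard := by
  rw [spanningTreeCount]
  rw [show {G' : SimpleGraph (VV b) | G' ≤ G ∧ G'.IsTree}
      = Subgraph.spanningCoe '' {H : G.Subgraph | H.IsSpanning ∧ H.coe.IsTree} from ?_]
  · rw [Set.ncard_image_of_injOn ?_]
    intro H1 h1 H2 h2 heq
    ext1
    · rw [h1.1.verts_eq_univ, h2.1.verts_eq_univ]
    · exact congrArg SimpleGraph.Adj heq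
  · ext G'
    constructor
    · rintro ⟨hle, ht⟩
      refine ⟨SimpleGraph.toSubgraph G' hle, ⟨SimpleGraph.toSubgraph.isSpanning G' hle, ?_⟩, ?_⟩
      · rw [← isTree_iff_of_iso ((SimpleGraph.toSubgraph G' hle).spanningCoeEquivCoeOfSpanning
          (SimpleGraph.toSubgraph.isSpanning G' hle))]
        exact ht
      · rfl
    · rintro ⟨H, ⟨hsp, htree⟩, rfl⟩
      refine ⟨H.spanningCoe_le, ?_⟩
      rw [isTree_iff_of_iso (H.spanningCoeEquivCoeOfSpanning hsp)]
      exact htree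

lemma main (b : ℕ) : spanningTreeCount (DNH 2 2 b) = 12 := by
  rw [spanningTreeCount_eq (DNH 2 2 b), tree_set_eq, ← Set.image_univ,
    Set.ncard_image_of_injOn psi_injective.injOn, Set.ncard_univ]
  simp [Nat.card_eq_fintype_card]

end STC


/-- The double nested bicyclic graph `H(1,2; 2, n-5)`, `n ≥ 6`, has exactly 12 spanning
trees. -/
theorem spanningTreeCount_DNH_bicyclic (n : ℕ) (hn : 6 ≤ n) :
    spanningTreeCount (DNH 2 2 (n - 5)) = 12 :=
  STC.main (n - 5)
end

section
/- Let H(1,1,1;2,1,n−6) for n ≥ 7 be the bipartite graph with U1 = {u1}, U2 = {u2}, U3 = {u3}, and V1, V2, V3 with |V1| = 2, |V2| = 1, |V3| = n−6, where u1 is adjacent to all of V1 ∪ V2 ∪ V3, u2 is adjacent to V1 ∪ V2, and u3 is adjacent exactly to V1. Then the number of spanning trees of H(1,1,1;2,1,n−6) equals 36. -/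
/-- The double nested graph `H(1,1,1; 2, 1, b)`: `u₁ = Sum.inl 0` is adjacent to all of
`V₁ ∪ V₂ ∪ V₃`, `u₂ = Sum.inl 1` is adjacent to `V₁ ∪ V₂`, and `u₃ = Sum.inl 2`
is adjacent exactly to `V₁`, where `|V₁| = 2`, `|V₂| = 1`, `|V₃| = b`. -/
def DNH3 (b : ℕ) : SimpleGraph (Fin 3 ⊕ (Fin 2 ⊕ (Fin 1 ⊕ Fin b))) :=
  SimpleGraph.fromRel (fun x y =>
    (∃ v : Fin 2 ⊕ (Fin 1 ⊕ Fin b), x = Sum.inl 0 ∧ y = Sum.inr v) ∨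
    (∃ v : Fin 2, x = Sum.inl 1 ∧ y = Sum.inr (Sum.inl v)) ∨
    (∃ v : Fin 1, x = Sum.inl 1 ∧ y = Sum.inr (Sum.inr (Sum.inl v))) ∨
    (∃ v : Fin 2, x = Sum.inl 2 ∧ y = Sum.inr (Sum.inl v)))

namespace DNHaux

abbrev VV (b : ℕ) := Fin 3 ⊕ (Fin 2 ⊕ (Fin 1 ⊕ Fin b))

def edge8 : Fin 8 → Sym2 (Fin 6)
  | 0 => s(0, 3) | 1 => s(0, 4) | 2 => s(0, 5)
  | 3 => s(1, 3) | 4 => s(1, 4) | 5 => s(1, 5)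
  | 6 => s(2, 3) | 7 => s(2, 4)

def cv (b : ℕ) : Fin 6 → VV b
  | 0 => .inl 0 | 1 => .inl 1 | 2 => .inl 2
  | 3 => .inr (.inl 0) | 4 => .inr (.inl 1) | 5 => .inr (.inr (.inl 0))

lemma cv_inj {b : ℕ} : Function.Injective (cv b) := by
  intro x y h
  fin_cases x <;> fin_cases y <;> simp_all [cv]

def EE (b : ℕ) (i : Fin 8) : Sym2 (VV b) := (edge8 i).map (cv b)

def pend (b : ℕ) (j : Fin b) : Sym2 (VV b) := s(.inl 0, .inr (.inr (.inr j)))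

lemma cv_ne_pendv {b : ℕ} (u : Fin 6) (j : Fin b) : cv b u ≠ .inr (.inr (.inr j)) := by
  fin_cases u <;> simp [cv]

lemma EE_inj {b : ℕ} : Function.Injective (EE b) := by
  intro i i' h
  have h8 : Function.Injective (edge8) := by decide
  exact h8 (Sym2.map.injective cv_inj h)

lemma pend_inj {b : ℕ} : Function.Injective (pend b) := by
  intro j j' h
  simpa [pend, Sym2.eq_iff] using h

lemma EE_ne_pend {b : ℕ} (i : Fin 8) (j : Fin b) : EE b i ≠ pend b j := by
  fin_cases i <;> simp [EE, edge8, pend, Sym2.eq_iff, Sym2.map_pair_eq, cv]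

lemma DNH3_edgeSet {b : ℕ} :
    (DNH3 b).edgeSet = Set.range (EE b) ∪ Set.range (pend b) := by
  ext e
  induction e using Sym2.ind with
  | _ x y =>
    simp only [SimpleGraph.mem_edgeSet, DNH3, SimpleGraph.fromRel_adj, Set.mem_union,
      Set.mem_range]
    constructor
    · rintro ⟨hne, h | h⟩
      · rcases h with ⟨v, rfl, rfl⟩ | ⟨v, rfl, rfl⟩ | ⟨v, rfl, rfl⟩ | ⟨v, rfl, rfl⟩
        · rcases v with v | v
          · fin_cases v
            · exact Or.inl ⟨0, by simp [EE, edge8, Sym2.map_pair_eq, cv]⟩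
            · exact Or.inl ⟨1, by simp [EE, edge8, Sym2.map_pair_eq, cv]⟩
          · rcases v with v | v
            · fin_cases v
              exact Or.inl ⟨2, by simp [EE, edge8, Sym2.map_pair_eq, cv]⟩
            · exact Or.inr ⟨v, by simp [pend]⟩
        · fin_cases v
          · exact Or.inl ⟨3, by simp [EE, edge8, Sym2.map_pair_eq, cv]⟩
          · exact Or.inl ⟨4, by simp [EE, edge8, Sym2.map_pair_eq, cv]⟩
        · fin_cases v
          exact Or.inl ⟨5, by simp [EE, edge8, Sym2.map_pair_eq, cv]⟩
        · fin_cases v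
          · exact Or.inl ⟨6, by simp [EE, edge8, Sym2.map_pair_eq, cv]⟩
          · exact Or.inl ⟨7, by simp [EE, edge8, Sym2.map_pair_eq, cv]⟩
      · rcases h with ⟨v, rfl, rfl⟩ | ⟨v, rfl, rfl⟩ | ⟨v, rfl, rfl⟩ | ⟨v, rfl, rfl⟩
        · rcases v with v | v
          · fin_cases v
            · exact Or.inl ⟨0, by simp [EE, edge8, Sym2.map_pair_eq, cv, Sym2.eq_swap]⟩
            · exact Or.inl ⟨1, by simp [EE, edge8, Sym2.map_pair_eq, cv, Sym2.eq_swap]⟩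
          · rcases v with v | v
            · fin_cases v
              exact Or.inl ⟨2, by simp [EE, edge8, Sym2.map_pair_eq, cv, Sym2.eq_swap]⟩
            · exact Or.inr ⟨v, by simp [pend, Sym2.eq_swap]⟩
        · fin_cases v
          · exact Or.inl ⟨3, by simp [EE, edge8, Sym2.map_pair_eq, cv, Sym2.eq_swap]⟩
          · exact Or.inl ⟨4, by simp [EE, edge8, Sym2.map_pair_eq, cv, Sym2.eq_swap]⟩
        · fin_cases v
          exact Or.inl ⟨5, by simp [EE, edge8, Sym2.map_pair_eq, cv, Sym2.eq_swap]⟩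
        · fin_cases v
          · exact Or.inl ⟨6, by simp [EE, edge8, Sym2.map_pair_eq, cv, Sym2.eq_swap]⟩
          · exact Or.inl ⟨7, by simp [EE, edge8, Sym2.map_pair_eq, cv, Sym2.eq_swap]⟩
    · rintro (⟨i, hi⟩ | ⟨j, hj⟩)
      · fin_cases i <;>
        · rw [EE] at hi
          simp only [edge8, Sym2.map_pair_eq, cv, Sym2.eq_iff] at hi
          rcases hi with ⟨rfl, rfl⟩ | ⟨rfl, rfl⟩ <;> simp [cv]
      · rw [pend, Sym2.eq_iff] at hj
        rcases hj with ⟨rfl, rfl⟩ | ⟨rfl, rfl⟩ <;> simp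

end DNHaux

namespace DNHaux
open SimpleGraph

def TS (b : ℕ) (s : Finset (Fin 8)) : (DNH3 b).Subgraph where
  verts := Set.univ
  Adj x y := (∃ i ∈ s, s(x, y) = EE b i) ∨ (∃ j, s(x, y) = pend b j)
  adj_sub := by
    rintro x y (⟨i, _, h⟩ | ⟨j, h⟩) <;> rw [← SimpleGraph.mem_edgeSet, h, DNH3_edgeSet]
    · exact Or.inl ⟨i, rfl⟩
    · exact Or.inr ⟨j, rfl⟩
  edge_vert _ := Set.mem_univ _
  symm := by
    refine ⟨fun x y h => ?_⟩
    rwa [Sym2.eq_swap] at h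

lemma TS_adj {b : ℕ} {s : Finset (Fin 8)} {x y : VV b} :
    (TS b s).Adj x y ↔ (∃ i ∈ s, s(x, y) = EE b i) ∨ (∃ j, s(x, y) = pend b j) := Iff.rfl

lemma TS_spanning {b : ℕ} (s : Finset (Fin 8)) : (TS b s).IsSpanning := fun _ => Set.mem_univ _

lemma TS_edgeSet {b : ℕ} (s : Finset (Fin 8)) :
    (TS b s).edgeSet = EE b '' ↑s ∪ Set.range (pend b) := by
  ext e
  induction e using Sym2.ind with
  | _ x y =>
    simp only [Subgraph.mem_edgeSet, TS_adj, Set.mem_union, Set.mem_image, Set.mem_range,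
      Finset.mem_coe, eq_comm]

lemma TS_edgeSet_ncard {b : ℕ} (s : Finset (Fin 8)) :
    (TS b s).edgeSet.ncard = s.card + b := by
  rw [TS_edgeSet]
  have hd : Disjoint (EE b '' ↑s) (Set.range (pend b)) := by
    rw [Set.disjoint_left]
    rintro e ⟨i, _, rfl⟩ ⟨j, hj⟩
    exact EE_ne_pend i j hj.symm
  rw [Set.ncard_union_eq hd ((Set.finite_range (EE b)).subset (Set.image_subset_range _ _))
    (Set.finite_range (pend b)),
    Set.ncard_image_of_injective _ EE_inj, Set.ncard_coe_finset, ← Set.image_univ,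
    Set.ncard_image_of_injective _ pend_inj]
  simp [Set.ncard_univ]

lemma TS_coe_edgeSet_ncard {b : ℕ} (s : Finset (Fin 8)) :
    (TS b s).coe.edgeSet.ncard = s.card + b := by
  rw [← TS_edgeSet_ncard s, ← Subgraph.image_coe_edgeSet_coe]
  exact (Set.ncard_image_of_injective _ (Sym2.map.injective Subtype.val_injective)).symm

end DNHaux

namespace DNHaux
open SimpleGraph

def adj8 (s : Finset (Fin 8)) (u v : Fin 6) : Prop := ∃ i ∈ s, edge8 i = s(u, v)

instance : ∀ s u v, Decidable (adj8 s u v) := fun s u v => by unfold adj8; infer_instance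

lemma adj8_symm {s : Finset (Fin 8)} {u v : Fin 6} (h : adj8 s u v) : adj8 s v u := by
  obtain ⟨i, hi, he⟩ := h
  exact ⟨i, hi, by rwa [Sym2.eq_swap]⟩

def step8 (s : Finset (Fin 8)) (t : Finset (Fin 6)) : Finset (Fin 6) :=
  t ∪ Finset.univ.filter (fun v => ∃ u ∈ t, adj8 s u v)

def connB (s : Finset (Fin 8)) : Prop := (step8 s)^[6] {0} = Finset.univ

instance : DecidablePred connB := fun s => by unfold connB; infer_instance

def Good : Finset (Finset (Fin 8)) := Finset.univ.filter (fun s => s.card = 5 ∧ connB s)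

lemma TS_adj_cv {b : ℕ} {s : Finset (Fin 8)} {u v : Fin 6} :
    (TS b s).Adj (cv b u) (cv b v) ↔ adj8 s u v := by
  rw [TS_adj]
  constructor
  · rintro (⟨i, hi, he⟩ | ⟨j, hj⟩)
    · refine ⟨i, hi, ?_⟩
      have : Sym2.map (cv b) s(u, v) = Sym2.map (cv b) (edge8 i) := by
        rwa [Sym2.map_pair_eq, ← EE]
      exact ((Sym2.map.injective cv_inj) this).symm
    · exfalso
      rw [pend, Sym2.eq_iff] at hj
      rcases hj with ⟨h1, h2⟩ | ⟨h1, h2⟩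
      · exact cv_ne_pendv v _ h2
      · exact cv_ne_pendv u _ h1
  · rintro ⟨i, hi, he⟩
    exact Or.inl ⟨i, hi, by rw [EE, he, Sym2.map_pair_eq]⟩

/-- Every vertex is either a core vertex or a pendant vertex. -/
lemma vert_cases {b : ℕ} (x : VV b) :
    (∃ u : Fin 6, x = cv b u) ∨ (∃ j : Fin b, x = .inr (.inr (.inr j))) := by
  rcases x with v | v
  · fin_cases v
    exacts [Or.inl ⟨0, rfl⟩, Or.inl ⟨1, rfl⟩, Or.inl ⟨2, rfl⟩]
  · rcases v with v | v
    · fin_cases v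
      exacts [Or.inl ⟨3, rfl⟩, Or.inl ⟨4, rfl⟩]
    · rcases v with v | v
      · fin_cases v
        exact Or.inl ⟨5, rfl⟩
      · exact Or.inr ⟨v, rfl⟩

lemma TS_adj_pend {b : ℕ} (s : Finset (Fin 8)) (j : Fin b) :
    (TS b s).Adj (.inl 0) (.inr (.inr (.inr j))) :=
  Or.inr ⟨j, rfl⟩

lemma reach_of_mem_iter {b : ℕ} {s : Finset (Fin 8)} :
    ∀ (k : ℕ) (v : Fin 6), v ∈ (step8 s)^[k] {0} →
      (TS b s).coe.Reachable ⟨cv b 0, Set.mem_univ _⟩ ⟨cv b v, Set.mem_univ _⟩ := by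
  intro k
  induction k with
  | zero =>
    intro v hv
    simp only [Function.iterate_zero, id, Finset.mem_singleton] at hv
    subst hv
    rfl
  | succ k ih =>
    intro v hv
    rw [Function.iterate_succ_apply', step8, Finset.mem_union] at hv
    rcases hv with hv | hv
    · exact ih v hv
    · rw [Finset.mem_filter] at hv
      obtain ⟨-, u, hu, hadj⟩ := hv
      exact (ih u hu).trans (SimpleGraph.Adj.reachable
        (Subgraph.Adj.coe (TS_adj_cv.2 hadj)))

lemma connected_of_connB {b : ℕ} {s : Finset (Fin 8)} (h : connB s) :
    (TS b s).coe.Connected := by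
  rw [SimpleGraph.connected_iff]
  refine ⟨?_, ⟨⟨cv b 0, Set.mem_univ _⟩⟩⟩
  have key : ∀ x : ↥(TS b s).verts,
      (TS b s).coe.Reachable ⟨cv b 0, Set.mem_univ _⟩ x := by
    rintro ⟨x, hx⟩
    rcases vert_cases x with ⟨u, rfl⟩ | ⟨j, rfl⟩
    · exact reach_of_mem_iter 6 u (by rw [connB] at h; rw [h]; exact Finset.mem_univ u)
    · exact SimpleGraph.Adj.reachable (Subgraph.Adj.coe (TS_adj_pend s j))
  intro x y
  exact (key x).symm.trans (key y)

end DNHaux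

namespace DNHaux
open SimpleGraph

lemma subset_step8 {s : Finset (Fin 8)} (t : Finset (Fin 6)) : t ⊆ step8 s t :=
  Finset.subset_union_left

lemma iter_mono {s : Finset (Fin 8)} (t : Finset (Fin 6)) (k : ℕ) :
    t ⊆ (step8 s)^[k] t := by
  induction k with
  | zero => simp
  | succ k ih =>
    rw [Function.iterate_succ_apply']
    exact ih.trans (subset_step8 _)

lemma step8_stab {s : Finset (Fin 8)} :
    step8 s ((step8 s)^[6] {0}) = (step8 s)^[6] {0} := by
  set f := step8 s with hf
  have key : ∀ k : ℕ, f^[k + 1] ({0} : Finset (Fin 6)) = f^[k] {0} ∨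
      1 + k ≤ (f^[k] ({0} : Finset (Fin 6))).card := by
    intro k
    induction k with
    | zero => right; simp
    | succ k ih =>
      rcases ih with h | h
      · left
        have h' : f (f^[k] ({0} : Finset (Fin 6))) = f^[k+1] {0} :=
          (Function.iterate_succ_apply' f k {0}).symm
        rw [Function.iterate_succ_apply', Function.iterate_succ_apply', h', h, h', h]
      · by_cases he : f^[k + 1] ({0} : Finset (Fin 6)) = f^[k] {0}
        · left
          have h' : f (f^[k] ({0} : Finset (Fin 6))) = f^[k+1] {0} :=
            (Function.iterate_succ_apply' f k {0}).symm
          rw [Function.iterate_succ_apply', Function.iterate_succ_apply', h', he, h', he]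
        · right
          have hsub : f^[k] ({0} : Finset (Fin 6)) ⊆ f^[k + 1] {0} := by
            rw [Function.iterate_succ_apply']
            exact subset_step8 _
          have : (f^[k] ({0} : Finset (Fin 6))).card < (f^[k + 1] {0}).card :=
            Finset.card_lt_card (Finset.ssubset_iff_subset_ne.2 ⟨hsub, Ne.symm he⟩)
          omega
    
  rcases key 6 with h | h
  · have h' : f (f^[6] ({0} : Finset (Fin 6))) = f^[6+1] {0} :=
      (Function.iterate_succ_apply' f 6 {0}).symm
    rw [h', h]
  · exfalso
    have := Finset.card_le_card (Finset.subset_univ ((f^[6] ({0} : Finset (Fin 6)))))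
    simp only [Finset.card_univ, Fintype.card_fin] at this
    omega

lemma reachable_invariant {W : Type*} {G : SimpleGraph W} (P : W → Prop)
    (h : ∀ x y, G.Adj x y → (P x ↔ P y)) {x y : W} (hr : G.Reachable x y) :
    P x ↔ P y := by
  obtain ⟨w⟩ := hr
  induction w with
  | nil => rfl
  | cons ha _ ih => exact (h _ _ ha).trans ih

lemma connB_of_connected {b : ℕ} {s : Finset (Fin 8)}
    (h : (TS b s).coe.Connected) : connB s := by
  classical
  set S := (step8 s)^[6] ({0} : Finset (Fin 6)) with hS
  have hzero : (0 : Fin 6) ∈ S := iter_mono {0} 6 (Finset.mem_singleton_self 0)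
  have hclosed : ∀ u v : Fin 6, u ∈ S → adj8 s u v → v ∈ S := by
    intro u v hu hadj
    have : v ∈ step8 s S := by
      rw [step8, Finset.mem_union]
      exact Or.inr (Finset.mem_filter.2 ⟨Finset.mem_univ v, u, hu, hadj⟩)
    rwa [hS, step8_stab] at this
  -- the invariant
  set P : ↥(TS b s).verts → Prop := fun x => ∀ u : Fin 6, ↑x = cv b u → u ∈ S with hP
  have hinv : ∀ x y, (TS b s).coe.Adj x y → (P x ↔ P y) := by
    have main : ∀ x y, (TS b s).Adj x y → ∀ hx hy,
        P ⟨x, hx⟩ → P ⟨y, hy⟩ := by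
      intro x y hadj hx hy hPx w hyw
      simp only at hyw
      rcases hadj with ⟨i, hi, he⟩ | ⟨j, hj⟩
      · obtain ⟨a, c, hac⟩ : ∃ a c, edge8 i = s(a, c) :=
          Sym2.ind (fun a c => ⟨a, c, rfl⟩) (edge8 i)
        rw [EE, hac, Sym2.map_pair_eq, Sym2.eq_iff] at he
        rcases he with ⟨hxa, hyc⟩ | ⟨hxc, hya⟩
        · have hw : w = c := cv_inj (by rw [← hyw, hyc])
          subst hw
          exact hclosed a w (hPx a hxa) ⟨i, hi, hac⟩
        · have hw : w = a := cv_inj (by rw [← hyw, hya])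
          subst hw
          exact hclosed c w (hPx c hxc) (adj8_symm ⟨i, hi, hac⟩)
      · rw [pend, Sym2.eq_iff] at hj
        rcases hj with ⟨hx0, hyp⟩ | ⟨hxp, hy0⟩
        · exact absurd ((hyw ▸ hyp).symm).symm (cv_ne_pendv w j)
        · have hw : w = 0 := cv_inj (by rw [← hyw, hy0]; rfl)
          subst hw
          exact hzero
    rintro ⟨x, hx⟩ ⟨y, hy⟩ hadj
    have hadj' : (TS b s).Adj x y := hadj
    exact ⟨main x y hadj' hx hy, main y x hadj'.symm hy hx⟩
  have hall : ∀ v : Fin 6, v ∈ S := by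
    intro v
    have hr : (TS b s).coe.Reachable ⟨cv b 0, Set.mem_univ _⟩ ⟨cv b v, Set.mem_univ _⟩ :=
      h.preconnected _ _
    have hP0 : P ⟨cv b 0, Set.mem_univ _⟩ := by
      intro u hu
      have : u = 0 := cv_inj hu.symm
      subst this; exact hzero
    exact ((reachable_invariant P hinv hr).1 hP0) v rfl
  rw [connB]
  exact Finset.eq_univ_iff_forall.2 hall

end DNHaux

namespace DNHaux
open SimpleGraph

lemma reachable_delete {W : Type*} {G : SimpleGraph W} {a b : W}
    (hre : (G \ SimpleGraph.fromEdgeSet {s(a, b)}).Reachable a b) {x y : W}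
    (h : G.Reachable x y) : (G \ SimpleGraph.fromEdgeSet {s(a, b)}).Reachable x y := by
  classical
  obtain ⟨w⟩ := h
  induction w with
  | nil => rfl
  | @cons x z y hadj p ih =>
    refine Reachable.trans ?_ ih
    by_cases he : s(x, z) = s(a, b)
    · rw [Sym2.eq_iff] at he
      rcases he with ⟨rfl, rfl⟩ | ⟨rfl, rfl⟩
      · exact hre
      · exact hre.symm
    · exact SimpleGraph.Adj.reachable (by
        rw [SimpleGraph.sdiff_adj]
        exact ⟨hadj, fun hcon => he ((SimpleGraph.fromEdgeSet_adj _).1 hcon).1⟩)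

lemma edgeFinset_card_eq_ncard {W : Type*} [Fintype W] (G : SimpleGraph W)
    [Fintype G.edgeSet] : G.edgeFinset.card = G.edgeSet.ncard :=
  (Set.ncard_eq_toFinset_card' _).symm

lemma conn_card_le {W : Type*} [Fintype W] :
    ∀ (m : ℕ) (G : SimpleGraph W), G.edgeSet.ncard = m → G.Connected →
      Fintype.card W ≤ m + 1 := by
  intro m
  induction m using Nat.strong_induction_on with
  | _ m ih =>
    intro G hm hconn
    classical
    by_cases hac : G.IsAcyclic
    · letI : Fintype G.edgeSet := Fintype.ofFinite _
      have ht : G.IsTree := ⟨hconn, hac⟩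
      have := ht.card_edgeFinset
      rw [edgeFinset_card_eq_ncard, hm] at this
      omega
    · rw [SimpleGraph.IsAcyclic] at hac
      push_neg at hac
      obtain ⟨v, c, hc⟩ := hac
      have hne : c.edges ≠ [] := by
        intro hnil
        have h3 := hc.three_le_length
        have := c.length_edges
        rw [hnil] at this
        simp at this
        omega
      obtain ⟨e, he⟩ := List.exists_mem_of_ne_nil _ hne
      obtain ⟨a, bb, rfl⟩ : ∃ a bb, e = s(a, bb) :=
        Sym2.ind (fun a bb => ⟨a, bb, rfl⟩) e
      have hadj : G.Adj a bb := c.adj_of_mem_edges he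
      have hre : (G \ SimpleGraph.fromEdgeSet {s(a, bb)}).Reachable a bb :=
        (SimpleGraph.adj_and_reachable_delete_edges_iff_exists_cycle.2 ⟨v, c, hc, he⟩).2
      set G' := G \ SimpleGraph.fromEdgeSet {s(a, bb)} with hG'
      have hconn' : G'.Connected := by
        rw [SimpleGraph.connected_iff]
        exact ⟨fun x y => reachable_delete hre (hconn x y), hconn.nonempty⟩
      have hes : G'.edgeSet = G.edgeSet \ {s(a, bb)} := by
        rw [hG', SimpleGraph.edgeSet_sdiff, SimpleGraph.edgeSet_fromEdgeSet,
          SimpleGraph.edgeSet_sdiff_sdiff_isDiag]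
      have hmem : s(a, bb) ∈ G.edgeSet := hadj
      have hpos : 0 < m := by
        rw [← hm]
        exact (Set.ncard_pos (Set.toFinite _)).2 ⟨_, hmem⟩
      have hcard' : G'.edgeSet.ncard = m - 1 := by
        rw [hes, Set.ncard_diff_singleton_of_mem hmem, hm]
      have := ih (m - 1) (by omega) G' hcard' hconn'
      omega

lemma isTree_of_connected_of_ncard {W : Type*} [Fintype W] {G : SimpleGraph W}
    (hconn : G.Connected) (hcard : G.edgeSet.ncard + 1 = Fintype.card W) : G.IsTree := by
  classical
  refine ⟨hconn, ?_⟩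
  by_contra hac
  rw [SimpleGraph.IsAcyclic] at hac
  push_neg at hac
  obtain ⟨v, c, hc⟩ := hac
  have hne : c.edges ≠ [] := by
    intro hnil
    have h3 := hc.three_le_length
    have := c.length_edges
    rw [hnil] at this
    simp at this
    omega
  obtain ⟨e, he⟩ := List.exists_mem_of_ne_nil _ hne
  obtain ⟨a, bb, rfl⟩ : ∃ a bb, e = s(a, bb) :=
    Sym2.ind (fun a bb => ⟨a, bb, rfl⟩) e
  have hadj : G.Adj a bb := c.adj_of_mem_edges he
  have hre : (G \ SimpleGraph.fromEdgeSet {s(a, bb)}).Reachable a bb :=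
    (SimpleGraph.adj_and_reachable_delete_edges_iff_exists_cycle.2 ⟨v, c, hc, he⟩).2
  set G' := G \ SimpleGraph.fromEdgeSet {s(a, bb)} with hG'
  have hconn' : G'.Connected := by
    rw [SimpleGraph.connected_iff]
    exact ⟨fun x y => reachable_delete hre (hconn x y), hconn.nonempty⟩
  have hes : G'.edgeSet = G.edgeSet \ {s(a, bb)} := by
    rw [hG', SimpleGraph.edgeSet_sdiff, SimpleGraph.edgeSet_fromEdgeSet,
      SimpleGraph.edgeSet_sdiff_sdiff_isDiag]
  have hmem : s(a, bb) ∈ G.edgeSet := hadj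
  have hpos : 0 < G.edgeSet.ncard := (Set.ncard_pos (Set.toFinite _)).2 ⟨_, hmem⟩
  have hcard' : G'.edgeSet.ncard = G.edgeSet.ncard - 1 := by
    rw [hes, Set.ncard_diff_singleton_of_mem hmem]
  have := conn_card_le _ G' hcard' hconn'
  omega

end DNHaux

namespace DNHaux
open SimpleGraph

lemma verts_card {b : ℕ} (s : Finset (Fin 8)) [Fintype ↥(TS b s).verts] :
    Fintype.card ↥(TS b s).verts = 6 + b := by
  have h1 : Fintype.card ↥(TS b s).verts = Fintype.card (VV b) :=
    Fintype.card_congr (Equiv.Set.univ _)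
  rw [h1]
  simp only [VV, Fintype.card_sum, Fintype.card_fin]
  omega

lemma TS_coe_isTree {b : ℕ} {s : Finset (Fin 8)} (hcard : s.card = 5) (hconn : connB s) :
    (TS b s).coe.IsTree := by
  letI : Fintype ↥(TS b s).verts := Fintype.ofFinite _
  refine isTree_of_connected_of_ncard (connected_of_connB hconn) ?_
  rw [TS_coe_edgeSet_ncard, verts_card, hcard]
  omega

lemma pendant_forced {b : ℕ} {H : (DNH3 b).Subgraph} (hsp : H.IsSpanning)
    (htree : H.coe.IsTree) (j : Fin b) :
    H.Adj (.inl 0) (.inr (.inr (.inr j))) := by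
  have hxv : (Sum.inr (Sum.inr (Sum.inr j)) : VV b) ∈ H.verts := hsp _
  have huv : (Sum.inl 0 : VV b) ∈ H.verts := hsp _
  have hr : H.coe.Reachable ⟨.inr (.inr (.inr j)), hxv⟩ ⟨.inl 0, huv⟩ :=
    htree.isConnected.preconnected _ _
  obtain ⟨w⟩ := hr
  have hnil : ¬ w.Nil := by
    refine SimpleGraph.Walk.not_nil_of_ne ?_
    intro hcon
    rw [Subtype.ext_iff] at hcon
    simp at hcon
  have hadj : H.coe.Adj ⟨.inr (.inr (.inr j)), hxv⟩ (w.getVert 1) :=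
    w.adj_snd hnil
  have hadj' : H.Adj (.inr (.inr (.inr j))) ↑(w.getVert 1) := hadj
  set z : VV b := ↑(w.getVert 1) with hz
  have hG : (DNH3 b).Adj (.inr (.inr (.inr j))) z := H.adj_sub hadj'
  rw [← SimpleGraph.mem_edgeSet, DNH3_edgeSet] at hG
  rcases hG with ⟨i, hi⟩ | ⟨j', hj'⟩
  · exfalso
    obtain ⟨a, c, hac⟩ : ∃ a c, edge8 i = s(a, c) :=
      Sym2.ind (fun a c => ⟨a, c, rfl⟩) (edge8 i)
    rw [EE, hac, Sym2.map_pair_eq, Sym2.eq_iff] at hi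
    rcases hi with ⟨h1, -⟩ | ⟨-, h2⟩
    · exact cv_ne_pendv a j h1
    · exact cv_ne_pendv c j h2
  · rw [pend, Sym2.eq_iff] at hj'
    rcases hj' with ⟨h1, -⟩ | ⟨h1, h2⟩
    · exact absurd h1.symm (by simp)
    · have hj'' : j' = j := by simpa using h2
      subst hj''
      rw [← h1] at hadj'
      exact hadj'.symm

open Classical in
lemma spanning_tree_eq_TS {b : ℕ} {H : (DNH3 b).Subgraph} (hsp : H.IsSpanning)
    (htree : H.coe.IsTree) :
    H = TS b (Finset.univ.filter (fun i => EE b i ∈ H.edgeSet)) := by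
  set s := Finset.univ.filter (fun i => EE b i ∈ H.edgeSet) with hs
  apply SimpleGraph.Subgraph.ext
  · rw [hsp.verts_eq_univ]; rfl
  · ext x y
    constructor
    · intro h
      have hG : (DNH3 b).Adj x y := H.adj_sub h
      rw [← SimpleGraph.mem_edgeSet, DNH3_edgeSet] at hG
      rcases hG with ⟨i, hi⟩ | ⟨j, hj⟩
      · exact Or.inl ⟨i, Finset.mem_filter.2 ⟨Finset.mem_univ i,
          by rw [hi]; exact h⟩, hi.symm⟩
      · exact Or.inr ⟨j, hj.symm⟩
    · rintro (⟨i, hi, he⟩ | ⟨j, hj⟩)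
      · rw [hs, Finset.mem_filter] at hi
        have : s(x, y) ∈ H.edgeSet := he ▸ hi.2
        exact this
      · rw [pend, Sym2.eq_iff] at hj
        rcases hj with ⟨rfl, rfl⟩ | ⟨rfl, rfl⟩
        · exact pendant_forced hsp htree j
        · exact (pendant_forced hsp htree j).symm

lemma TS_inj {b : ℕ} : Function.Injective (TS b) := by
  intro s s' h
  have hadj : ∀ u v, adj8 s u v ↔ adj8 s' u v := by
    intro u v
    rw [← @TS_adj_cv b, ← @TS_adj_cv b, h]
  ext i
  obtain ⟨a, c, hac⟩ : ∃ a c, edge8 i = s(a, c) :=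
    Sym2.ind (fun a c => ⟨a, c, rfl⟩) (edge8 i)
  have h8 : Function.Injective edge8 := by decide
  have key : ∀ t : Finset (Fin 8), i ∈ t ↔ adj8 t a c := by
    intro t
    constructor
    · intro hi; exact ⟨i, hi, hac⟩
    · rintro ⟨i', hi', he⟩
      have : i' = i := h8 (by rw [he, hac])
      subst this; exact hi'
  rw [key s, key s', hadj]

set_option maxHeartbeats 4000000 in
lemma good_card : Good.card = 36 := by decide

theorem spanningTreeCount_DNH3' (b : ℕ) : spanningTreeCount (DNH3 b) = 36 := by
  classical
  have hset : {H : (DNH3 b).Subgraph | H.IsSpanning ∧ H.coe.IsTree} = TS b '' ↑Good := by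
    ext H
    simp only [Set.mem_setOf_eq, Set.mem_image, Finset.mem_coe, Good, Finset.mem_filter,
      Finset.mem_univ, true_and]
    constructor
    · rintro ⟨hsp, htree⟩
      refine ⟨Finset.univ.filter (fun i => EE b i ∈ H.edgeSet), ⟨?_, ?_⟩,
        (spanning_tree_eq_TS hsp htree).symm⟩
      · -- card = 5
        set s := Finset.univ.filter (fun i => EE b i ∈ H.edgeSet) with hs
        have hHeq := spanning_tree_eq_TS hsp htree
        letI : Fintype ↥(TS b s).verts := Fintype.ofFinite _
        letI : Fintype ((TS b s).coe.edgeSet) := Fintype.ofFinite _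
        have hfin := ((hHeq ▸ htree) : (TS b s).coe.IsTree).card_edgeFinset
        rw [edgeFinset_card_eq_ncard, TS_coe_edgeSet_ncard, verts_card] at hfin
        rw [← hs] at hfin
        omega
      · -- connB
        have hHeq := spanning_tree_eq_TS hsp htree
        exact connB_of_connected ((hHeq ▸ htree) :
          (TS b _).coe.IsTree).isConnected
    · rintro ⟨s, ⟨hc, hconn⟩, rfl⟩
      exact ⟨TS_spanning s, TS_coe_isTree hc hconn⟩
  rw [spanningTreeCount, hset, Set.ncard_image_of_injective _ TS_inj,
    Set.ncard_coe_finset, good_card]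

end DNHaux

/-- The double nested tricyclic graph `H(1,1,1; 2, 1, n-6)`, `n ≥ 7`, has exactly 36
spanning trees. -/
theorem spanningTreeCount_DNH3_tricyclic (n : ℕ) (hn : 7 ≤ n) :
    spanningTreeCount (DNH3 (n - 6)) = 36 := by
  exact DNHaux.spanningTreeCount_DNH3' (n - 6)
end
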